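/- arXiv:math/0204141 — 2 statements merged into one kernel-verified Lean document; each statement's English description precedes it below -/
import Mathlib

section
/- A finite-dimensional quasi-Hopf algebra H over a field k is semisimple (as a ring) if and only if there exists a left integral t ∈ H (that is, an element satisfying ht = ε(h)t for all h ∈ H) with ε(t) ≠ 0. -/
open TensorProduct MulOpposite

/-- Contraction of a twofold tensor: `x ⊗ y ↦ f x * g y`. -/
noncomputable def tmul2 (k : Type*) {H : Type*} [Field k] [Ring H] [Algebra k H]
    (f g : H →ₗ[k] H) : H ⊗[k] H →ₗ[k] H :=
  LinearMap.mul' k H ∘ₗ TensorProduct.map f g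

/-- Contraction of a threefold tensor: `x ⊗ y ⊗ z ↦ f x * (g y * h z)`. -/
noncomputable def tmul3 (k : Type*) {H : Type*} [Field k] [Ring H] [Algebra k H]
    (f g h : H →ₗ[k] H) : H ⊗[k] (H ⊗[k] H) →ₗ[k] H :=
  LinearMap.mul' k H ∘ₗ TensorProduct.map f (tmul2 k g h)

/-- A quasibialgebra over a field `k`: an algebra `H` with algebra maps
`Δ : H → H ⊗ H`, `ε : H → k` and an invertible associator `φ ∈ H ⊗ H ⊗ H`
satisfying Drinfeld's axioms. -/
structure QuasiBialgebra (k H : Type*) [Field k] [Ring H] [Algebra k H] where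
  comul : H →ₐ[k] H ⊗[k] H
  counit : H →ₐ[k] k
  assoc : H ⊗[k] (H ⊗[k] H)
  assocInv : H ⊗[k] (H ⊗[k] H)
  assoc_mul_inv : assoc * assocInv = 1
  inv_mul_assoc : assocInv * assoc = 1
  counit_comul_left : ∀ h : H,
    (TensorProduct.lid k H) ((TensorProduct.map counit.toLinearMap LinearMap.id) (comul h)) = h
  counit_comul_right : ∀ h : H,
    (TensorProduct.rid k H) ((TensorProduct.map LinearMap.id counit.toLinearMap) (comul h)) = h
  quasi_coassoc : ∀ h : H,
    (Algebra.TensorProduct.map (AlgHom.id k H) comul) (comul h) * assoc =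
      assoc * (Algebra.TensorProduct.assoc k k k H H H)
        ((Algebra.TensorProduct.map comul (AlgHom.id k H)) (comul h))
  pentagon :
    (Algebra.TensorProduct.map (AlgHom.id k H) (Algebra.TensorProduct.map (AlgHom.id k H) comul)) assoc *
      (Algebra.TensorProduct.assoc k k k H H (H ⊗[k] H))
        ((Algebra.TensorProduct.map comul (AlgHom.id k (H ⊗[k] H))) assoc) =
    (Algebra.TensorProduct.includeRight (R := k) (A := H) assoc) *
      (Algebra.TensorProduct.map (AlgHom.id k H) (Algebra.TensorProduct.assoc k k k H H H).toAlgHom)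
        ((Algebra.TensorProduct.map (AlgHom.id k H)
          (Algebra.TensorProduct.map comul (AlgHom.id k H))) assoc) *
      (Algebra.TensorProduct.map (AlgHom.id k H) (Algebra.TensorProduct.assoc k k k H H H).toAlgHom)
        ((Algebra.TensorProduct.assoc k k k H (H ⊗[k] H) H)
          ((Algebra.TensorProduct.includeLeft (R := k) (B := H)
            (A := H ⊗[k] (H ⊗[k] H)) (S := k)) assoc))
  counit_mid :
    (TensorProduct.map LinearMap.id
      ((TensorProduct.lid k H).toLinearMap ∘ₗ
        TensorProduct.map counit.toLinearMap LinearMap.id)) assoc = 1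

/-- A quasiantipode `(S, α, β)` for a quasibialgebra. -/
structure QuasiAntipode {k H : Type*} [Field k] [Ring H] [Algebra k H]
    (qb : QuasiBialgebra k H) where
  S : H →ₗ[k] H
  S_bijective : Function.Bijective S
  S_one : S 1 = 1
  S_mul : ∀ a b : H, S (a * b) = S b * S a
  α : H
  β : H
  antipode_left : ∀ h : H,
    tmul2 k (LinearMap.mulRight k α ∘ₗ S) LinearMap.id (qb.comul h) = qb.counit h • α
  antipode_right : ∀ h : H,
    tmul2 k (LinearMap.mulRight k β) S (qb.comul h) = qb.counit h • β
  antipode_assoc :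
    tmul3 k (LinearMap.mulRight k β) (LinearMap.mulRight k α ∘ₗ S) LinearMap.id qb.assoc = 1
  antipode_assocInv :
    tmul3 k (LinearMap.mulRight k α ∘ₗ S) (LinearMap.mulRight k β) LinearMap.id qb.assocInv = 1

section PanaiteAux

variable {k H : Type*} [Field k] [Ring H] [Algebra k H]

/-- `a ⊗ b ↦ a ⊗ (b ⊗ 1)`. -/
noncomputable def qEmb (k H : Type*) [Field k] [Ring H] [Algebra k H] :
    H ⊗[k] H →ₐ[k] H ⊗[k] (H ⊗[k] H) :=
  Algebra.TensorProduct.map (AlgHom.id k H) Algebra.TensorProduct.includeLeft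

lemma qEmb_tmul (a b : H) : qEmb k H (a ⊗ₜ[k] b) = a ⊗ₜ[k] (b ⊗ₜ[k] (1:H)) := by
  simp [qEmb]

lemma tmul2_tmul (f g : H →ₗ[k] H) (a b : H) : tmul2 k f g (a ⊗ₜ[k] b) = f a * g b := by
  simp [tmul2]

lemma tmul3_tmul (f g h : H →ₗ[k] H) (a : H) (z : H ⊗[k] H) :
    tmul3 k f g h (a ⊗ₜ[k] z) = f a * tmul2 k g h z := by
  simp [tmul3]

lemma qEmb_eq_assoc (τ : H ⊗[k] H) :
    qEmb k H τ = (Algebra.TensorProduct.assoc k k k H H H) (τ ⊗ₜ[k] (1:H)) := by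
  induction τ using TensorProduct.induction_on with
  | zero => simp [zero_tmul]
  | tmul a b => simp [qEmb, Algebra.TensorProduct.assoc_tmul]
  | add x y hx hy => rw [map_add, add_tmul, map_add, hx, hy]

variable {qb : QuasiBialgebra k H} (qa : QuasiAntipode qb)

/-- `Gmap (v ⊗ w) = S v * α * w`. -/
noncomputable def Gmap : H ⊗[k] H →ₗ[k] H :=
  tmul2 k (LinearMap.mulRight k qa.α ∘ₗ qa.S) LinearMap.id

lemma Gmap_tmul (v w : H) : Gmap qa (v ⊗ₜ[k] w) = qa.S v * qa.α * w := by
  simp [Gmap, tmul2, mul_assoc]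

lemma Gmap_comul (b : H) : Gmap qa (qb.comul b) = qb.counit b • qa.α :=
  qa.antipode_left b

/-- GL0 -/
lemma Gmap_mul_tmul (z : H ⊗[k] H) (c d : H) :
    Gmap qa (z * (c ⊗ₜ[k] d)) = qa.S c * (Gmap qa z * d) := by
  induction z using TensorProduct.induction_on with
  | zero => simp
  | tmul v w =>
      rw [Algebra.TensorProduct.tmul_mul_tmul, Gmap_tmul, Gmap_tmul, qa.S_mul]
      simp [mul_assoc]
  | add x y hx hy => rw [add_mul, map_add, hx, hy, map_add, add_mul, mul_add]

/-- GL1 -/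
lemma Gmap_comul_mul (b : H) (z : H ⊗[k] H) :
    Gmap qa (qb.comul b * z) = qb.counit b • Gmap qa z := by
  induction z using TensorProduct.induction_on with
  | zero => simp
  | tmul c d =>
      rw [Gmap_mul_tmul, Gmap_comul, Gmap_tmul]
      simp [mul_assoc, mul_smul_comm, smul_mul_assoc]
  | add x y hx hy => rw [mul_add, map_add, hx, hy, map_add, smul_add]

/-- The separability-type element built from `τ` (to be `Δ t`). -/
noncomputable def eElt (τ : H ⊗[k] H) : H ⊗[k] H :=
  TensorProduct.map (LinearMap.mulRight k qa.β) (Gmap qa) (qb.assoc * qEmb k H τ)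

lemma tmul2_eq_Gmap :
    tmul2 k (LinearMap.mulRight k qa.α ∘ₗ qa.S) LinearMap.id = Gmap qa := rfl

/-- L1p : contracting `map F G (x * qEmb τ)` -/
lemma mul_map_qEmb (x : H ⊗[k] (H ⊗[k] H)) (τ : H ⊗[k] H) :
    LinearMap.mul' k H
      (TensorProduct.map (LinearMap.mulRight k qa.β) (Gmap qa) (x * qEmb k H τ)) =
    tmul3 k (LinearMap.mulRight k (tmul2 k (LinearMap.mulRight k qa.β) qa.S τ))
      (LinearMap.mulRight k qa.α ∘ₗ qa.S) LinearMap.id x := by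
  induction x using TensorProduct.induction_on with
  | zero => simp
  | tmul u z =>
      induction τ using TensorProduct.induction_on with
      | zero => simp [tmul3_tmul]
      | tmul a b =>
          rw [qEmb_tmul, Algebra.TensorProduct.tmul_mul_tmul, TensorProduct.map_tmul,
            LinearMap.mul'_apply, tmul3_tmul, tmul2_eq_Gmap qa, Gmap_mul_tmul,
            tmul2_tmul]
          simp [mul_assoc]
      | add σ ρ hσ hρ =>
          rw [map_add, mul_add, map_add, map_add, hσ, hρ]
          simp [tmul2, tmul3, mul_add, add_mul]
  | add x y hx hy => rw [add_mul, map_add, map_add, hx, hy, map_add]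

/-- W1 -/
lemma map_comulLeft_mul (Y : H ⊗[k] H) (x : H ⊗[k] (H ⊗[k] H)) :
    TensorProduct.map (LinearMap.mulRight k qa.β) (Gmap qa)
      ((Algebra.TensorProduct.map (AlgHom.id k H) qb.comul) Y * x) =
    (((TensorProduct.rid k H) ((TensorProduct.map LinearMap.id qb.counit.toLinearMap) Y))
        ⊗ₜ[k] (1:H)) *
      TensorProduct.map (LinearMap.mulRight k qa.β) (Gmap qa) x := by
  induction Y using TensorProduct.induction_on with
  | zero => simp
  | tmul a b =>
      induction x using TensorProduct.induction_on with
      | zero => simp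
      | tmul u z =>
          rw [Algebra.TensorProduct.map_tmul, AlgHom.coe_id, id_eq,
            Algebra.TensorProduct.tmul_mul_tmul, TensorProduct.map_tmul,
            TensorProduct.map_tmul, Gmap_comul_mul, TensorProduct.map_tmul,
            Algebra.TensorProduct.tmul_mul_tmul]
          simp [TensorProduct.smul_tmul', tmul_smul, mul_assoc, smul_mul_assoc,
            mul_smul_comm]
      | add x y hx hy => rw [mul_add, map_add, hx, hy, map_add, mul_add]
  | add Y Z hY hZ =>
      rw [map_add, add_mul, map_add, hY, hZ]
      simp [map_add, add_tmul, add_mul]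

/-- W2a1 -/
lemma map_comulRight_mul_int (t : H) (ht : ∀ h : H, h * t = qb.counit h • t)
    (Y : H ⊗[k] H) :
    (Algebra.TensorProduct.map qb.comul (AlgHom.id k H)) Y * (qb.comul t ⊗ₜ[k] (1:H)) =
    qb.comul t ⊗ₜ[k]
      ((TensorProduct.lid k H) ((TensorProduct.map qb.counit.toLinearMap LinearMap.id) Y)) := by
  induction Y using TensorProduct.induction_on with
  | zero => simp
  | tmul a b =>
      rw [Algebra.TensorProduct.map_tmul, AlgHom.coe_id, id_eq,
        Algebra.TensorProduct.tmul_mul_tmul, ← map_mul, ht a, map_smul]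
      simp [TensorProduct.smul_tmul, TensorProduct.lid_tmul]
  | add Y Z hY hZ =>
      rw [map_add, add_mul, hY, hZ, map_add, map_add, tmul_add]

/-- W2b -/
lemma map_mul_assocElt (x : H ⊗[k] (H ⊗[k] H)) (τ : H ⊗[k] H) (h : H) :
    TensorProduct.map (LinearMap.mulRight k qa.β) (Gmap qa)
      (x * (Algebra.TensorProduct.assoc k k k H H H) (τ ⊗ₜ[k] h)) =
    TensorProduct.map (LinearMap.mulRight k qa.β) (Gmap qa) (x * qEmb k H τ) *
      ((1:H) ⊗ₜ[k] h) := by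
  induction x using TensorProduct.induction_on with
  | zero => simp
  | tmul u z =>
      induction τ using TensorProduct.induction_on with
      | zero => simp [zero_tmul]
      | tmul a b =>
          rw [Algebra.TensorProduct.assoc_tmul, qEmb_tmul,
            Algebra.TensorProduct.tmul_mul_tmul, Algebra.TensorProduct.tmul_mul_tmul,
            TensorProduct.map_tmul, TensorProduct.map_tmul,
            Algebra.TensorProduct.tmul_mul_tmul, Gmap_mul_tmul, Gmap_mul_tmul]
          simp [mul_assoc]
      | add σ ρ hσ hρ =>
          rw [add_tmul, map_add, mul_add, map_add, hσ, hρ]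
          simp [map_add, mul_add, add_mul]
  | add x y hx hy =>
      rw [add_mul, add_mul, map_add, map_add, hx, hy, add_mul]

/-- Key property 1 : `m (e) = 1`. -/
lemma mul_eElt_one (t : H) (hε : qb.counit t = 1) :
    LinearMap.mul' k H (eElt qa (qb.comul t)) = 1 := by
  rw [eElt, mul_map_qEmb]
  have hβ : tmul2 k (LinearMap.mulRight k qa.β) qa.S (qb.comul t) = qa.β := by
    rw [qa.antipode_right, hε, one_smul]
  rw [hβ]
  exact qa.antipode_assoc

/-- Key property 2 : `(h ⊗ 1) * e = e * (1 ⊗ h)`. -/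
lemma eElt_comm (t : H) (ht : ∀ h : H, h * t = qb.counit h • t) (h : H) :
    (h ⊗ₜ[k] (1:H)) * eElt qa (qb.comul t) = eElt qa (qb.comul t) * ((1:H) ⊗ₜ[k] h) := by
  have h1 : qb.comul t ⊗ₜ[k] h =
      (Algebra.TensorProduct.map qb.comul (AlgHom.id k H)) (qb.comul h) *
        (qb.comul t ⊗ₜ[k] (1:H)) := by
    rw [map_comulRight_mul_int t ht, qb.counit_comul_left]
  calc (h ⊗ₜ[k] (1:H)) * eElt qa (qb.comul t)
      = ((TensorProduct.rid k H)
            ((TensorProduct.map LinearMap.id qb.counit.toLinearMap) (qb.comul h))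
          ⊗ₜ[k] (1:H)) *
          TensorProduct.map (LinearMap.mulRight k qa.β) (Gmap qa)
            (qb.assoc * qEmb k H (qb.comul t)) := by
        rw [qb.counit_comul_right, eElt]
    _ = TensorProduct.map (LinearMap.mulRight k qa.β) (Gmap qa)
          ((Algebra.TensorProduct.map (AlgHom.id k H) qb.comul) (qb.comul h) *
            (qb.assoc * qEmb k H (qb.comul t))) := by
        rw [map_comulLeft_mul]
    _ = TensorProduct.map (LinearMap.mulRight k qa.β) (Gmap qa)
          (qb.assoc *
            ((Algebra.TensorProduct.assoc k k k H H H)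
              ((Algebra.TensorProduct.map qb.comul (AlgHom.id k H)) (qb.comul h)) *
             qEmb k H (qb.comul t))) := by
        rw [← mul_assoc, qb.quasi_coassoc, mul_assoc]
    _ = TensorProduct.map (LinearMap.mulRight k qa.β) (Gmap qa)
          (qb.assoc * (Algebra.TensorProduct.assoc k k k H H H) (qb.comul t ⊗ₜ[k] h)) := by
        rw [qEmb_eq_assoc, ← _root_.map_mul (Algebra.TensorProduct.assoc k k k H H H), ← h1]
    _ = eElt qa (qb.comul t) * ((1:H) ⊗ₜ[k] h) := by
        rw [map_mul_assocElt, eElt]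

section Projection

variable (N : Submodule H H) (π : H →ₗ[k] H)

lemma projAux_mem (hmem : ∀ x : H, π x ∈ N) (w : H) (x : H ⊗[k] H) :
    LinearMap.mul' k H
      (TensorProduct.map LinearMap.id (π ∘ₗ LinearMap.mulRight k w) x) ∈ N := by
  induction x using TensorProduct.induction_on with
  | zero => simp only [map_zero]; exact N.zero_mem
  | tmul a b =>
      simp only [TensorProduct.map_tmul, LinearMap.mul'_apply, LinearMap.coe_comp,
        Function.comp_apply, LinearMap.mulRight_apply, LinearMap.id_coe, id_eq]
      rw [← smul_eq_mul]
      exact N.smul_mem a (hmem _)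
  | add x y hx hy => rw [map_add, map_add]; exact N.add_mem hx hy

lemma projAux_add (w w' : H) (x : H ⊗[k] H) :
    LinearMap.mul' k H
      (TensorProduct.map LinearMap.id (π ∘ₗ LinearMap.mulRight k (w + w')) x) =
    LinearMap.mul' k H
      (TensorProduct.map LinearMap.id (π ∘ₗ LinearMap.mulRight k w) x) +
    LinearMap.mul' k H
      (TensorProduct.map LinearMap.id (π ∘ₗ LinearMap.mulRight k w') x) := by
  induction x using TensorProduct.induction_on with
  | zero => simp
  | tmul a b => simp [mul_add, map_add]
  | add x y hx hy => simp only [map_add, hx, hy]; abel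

lemma projAux_mul (h w : H) (x : H ⊗[k] H) :
    LinearMap.mul' k H
      (TensorProduct.map LinearMap.id (π ∘ₗ LinearMap.mulRight k (h * w)) x) =
    LinearMap.mul' k H
      (TensorProduct.map LinearMap.id (π ∘ₗ LinearMap.mulRight k w)
        (x * ((1:H) ⊗ₜ[k] h))) := by
  induction x using TensorProduct.induction_on with
  | zero => simp
  | tmul a b =>
      rw [Algebra.TensorProduct.tmul_mul_tmul]
      simp [mul_assoc]
  | add x y hx hy => rw [map_add, map_add, hx, hy, add_mul, map_add, map_add]

lemma projAux_left (h w : H) (x : H ⊗[k] H) :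
    LinearMap.mul' k H
      (TensorProduct.map LinearMap.id (π ∘ₗ LinearMap.mulRight k w)
        ((h ⊗ₜ[k] (1:H)) * x)) =
    h * LinearMap.mul' k H
      (TensorProduct.map LinearMap.id (π ∘ₗ LinearMap.mulRight k w) x) := by
  induction x using TensorProduct.induction_on with
  | zero => simp
  | tmul a b =>
      rw [Algebra.TensorProduct.tmul_mul_tmul]
      simp [mul_assoc]
  | add x y hx hy => rw [mul_add, map_add, map_add, hx, hy, map_add, map_add, mul_add]

lemma projAux_fix (hfix : ∀ x ∈ N, π x = x) (n : H) (hn : n ∈ N) (x : H ⊗[k] H) :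
    LinearMap.mul' k H
      (TensorProduct.map LinearMap.id (π ∘ₗ LinearMap.mulRight k n) x) =
    LinearMap.mul' k H x * n := by
  induction x using TensorProduct.induction_on with
  | zero => simp
  | tmul a b =>
      have hbn : b * n ∈ N := by rw [← smul_eq_mul]; exact N.smul_mem b hn
      simp only [TensorProduct.map_tmul, LinearMap.mul'_apply, LinearMap.coe_comp,
        Function.comp_apply, LinearMap.mulRight_apply, LinearMap.id_coe, id_eq,
        hfix _ hbn, mul_assoc]
  | add x y hx hy => rw [map_add, map_add, hx, hy, map_add, add_mul]

end Projection

include qa in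
/-- Maschke direction: a left integral with nonzero counit gives semisimplicity. -/
theorem semisimple_of_integral (t : H) (ht : ∀ h : H, h * t = qb.counit h • t)
    (hε : qb.counit t = 1) : IsSemisimpleRing H := by
  have hE1 : LinearMap.mul' k H (eElt qa (qb.comul t)) = 1 := mul_eElt_one qa t hε
  have hEc : ∀ h : H, (h ⊗ₜ[k] (1:H)) * eElt qa (qb.comul t) =
      eElt qa (qb.comul t) * ((1:H) ⊗ₜ[k] h) := eElt_comm qa t ht
  set E := eElt qa (qb.comul t) with hEdef
  refine { toComplementedLattice := ComplementedLattice.mk ?_ }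
  intro N
  obtain ⟨q, hq⟩ := (N.restrictScalars k).exists_isCompl
  set π : H →ₗ[k] H :=
    (N.restrictScalars k).subtype ∘ₗ (N.restrictScalars k).linearProjOfIsCompl q hq with hπ
  have hmem : ∀ x : H, π x ∈ N := fun x =>
    ((N.restrictScalars k).linearProjOfIsCompl q hq x).2
  have hfix : ∀ x ∈ N, π x = x := by
    intro x hx
    have h2 : (N.restrictScalars k).linearProjOfIsCompl q hq x = ⟨x, hx⟩ :=
      Submodule.linearProjOfIsCompl_apply_left hq ⟨x, hx⟩
    rw [hπ, LinearMap.comp_apply, h2]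
    rfl
  let p : H →ₗ[H] H :=
    { toFun := fun w => LinearMap.mul' k H
        (TensorProduct.map LinearMap.id (π ∘ₗ LinearMap.mulRight k w) E)
      map_add' := fun w w' => projAux_add π w w' E
      map_smul' := fun h w => by
        simp only [RingHom.id_apply, smul_eq_mul]
        rw [projAux_mul, ← hEc, projAux_left] }
  have hproj : LinearMap.IsProj N p :=
    ⟨fun x => projAux_mem N π hmem x E,
     fun x hx => by
        show LinearMap.mul' k H
          (TensorProduct.map LinearMap.id (π ∘ₗ LinearMap.mulRight k x) E) = x
        rw [projAux_fix N π hfix x hx E, hE1, one_mul]⟩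
  exact ⟨LinearMap.ker p, hproj.isCompl⟩

end PanaiteAux

section Forward

variable {k H : Type*} [Field k] [Ring H] [Algebra k H]

theorem integral_of_semisimple (qb : QuasiBialgebra k H) [inst : IsSemisimpleRing H] :
    ∃ t : H, (∀ h : H, h * t = qb.counit h • t) ∧ qb.counit t ≠ 0 := by
  set K : Submodule H H := RingHom.ker qb.counit.toRingHom with hK
  obtain ⟨I, hI⟩ := exists_isCompl K
  have hKtop : K ≠ ⊤ := by
    intro htop
    have h1 : (1:H) ∈ K := htop ▸ Submodule.mem_top
    have : qb.counit (1:H) = 0 := h1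
    rw [map_one] at this
    exact one_ne_zero this
  have hIbot : I ≠ ⊥ := by
    intro hbot
    apply hKtop
    have := hI.codisjoint
    rw [hbot, codisjoint_bot] at this
    exact this
  obtain ⟨t, htI, ht0⟩ := Submodule.exists_mem_ne_zero_of_ne_bot hIbot
  have hεt : qb.counit t ≠ 0 := by
    intro h0
    apply ht0
    have htK : t ∈ K := h0
    have hdisj := hI.disjoint
    exact (Submodule.disjoint_def.mp hdisj) t htK htI
  refine ⟨t, fun h => ?_, hεt⟩
  have hsmul : qb.counit h • t = algebraMap k H (qb.counit h) * t := Algebra.smul_def _ _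
  have hd1 : h * t - qb.counit h • t ∈ I := by
    apply I.sub_mem
    · rw [← smul_eq_mul]; exact I.smul_mem h htI
    · rw [hsmul, ← smul_eq_mul]; exact I.smul_mem _ htI
  have hd2 : h * t - qb.counit h • t ∈ K := by
    show qb.counit.toRingHom (h * t - qb.counit h • t) = 0
    show qb.counit (h * t - qb.counit h • t) = 0
    rw [map_sub, map_mul, map_smul, smul_eq_mul, sub_self]
  have : h * t - qb.counit h • t = 0 := by
    have hdisj := hI.disjoint
    exact (Submodule.disjoint_def.mp hdisj) _ hd2 hd1
  exact sub_eq_zero.mp this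

end Forward


/-- **Panaite's theorem.** A finite-dimensional quasi-Hopf algebra is semisimple (as a
ring) if and only if it contains a left integral `t` (an element with `h * t = ε h • t`
for all `h`) with `ε t ≠ 0`. -/
theorem quasiHopf_semisimple_iff_integral
    {k H : Type*} [Field k] [Ring H] [Algebra k H]
    (qb : QuasiBialgebra k H) (qa : QuasiAntipode qb) [FiniteDimensional k H] :
    IsSemisimpleRing H ↔
      ∃ t : H, (∀ h : H, h * t = qb.counit h • t) ∧ qb.counit t ≠ 0 := by
  constructor
  · intro hss
    exact integral_of_semisimple qb (inst := hss)
  · rintro ⟨t0, ht0, hε0⟩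
    refine semisimple_of_integral qa ((qb.counit t0)⁻¹ • t0) (fun h => ?_) ?_
    · rw [mul_smul_comm, ht0 h, smul_comm]
    · rw [map_smul, smul_eq_mul, inv_mul_cancel₀ hε0]
end

section
/- Let H be a finite-dimensional quasi-Hopf algebra over a field k with counit ε, and let K ⊆ H be a subalgebra such that H is free as a left K-module. If H contains a left integral t (that is, ht = ε(h)t for all h ∈ H) with ε(t) ≠ 0, then K contains an element t' with kt' = ε(k)t' for all k ∈ K and ε(t') ≠ 0. -/
open TensorProduct MulOpposite

/-- If a finite-dimensional quasi-Hopf algebra `H` is free as a left module over a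
subalgebra `K` and contains a left integral `t` with `ε t ≠ 0`, then `K` contains an
element `t'` with `a * t' = ε a • t'` for all `a ∈ K` and `ε t' ≠ 0`. -/
theorem integral_descends_to_subalgebra
    {k H : Type*} [Field k] [Ring H] [Algebra k H]
    (qb : QuasiBialgebra k H) (qa : QuasiAntipode qb) [FiniteDimensional k H]
    (K : Subalgebra k H) (hfree : Module.Free K H)
    (t : H) (ht : ∀ h : H, h * t = qb.counit h • t) (htn : qb.counit t ≠ 0) :
    ∃ t' : K, (∀ a : K, a * t' = qb.counit (a : H) • t') ∧ qb.counit (t' : H) ≠ 0 := by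
  haveI : Module.Finite K H := Module.Finite.of_restrictScalars_finite k K H
  set b := Module.Free.chooseBasis K H with hb
  have hrepr : ∀ (a : K) (i), a * b.repr t i = qb.counit (a : H) • b.repr t i := by
    intro a i
    have h1 : a • t = qb.counit (a : H) • t := by
      have : a • t = (a : H) * t := rfl
      rw [this, ht]
    have h2 : b.repr (a • t) = a • b.repr t := map_smul _ _ _
    have h3 : b.repr (qb.counit (a : H) • t) = qb.counit (a : H) • b.repr t := by
      rw [← algebraMap_smul K (qb.counit (a : H)) t, map_smul, algebraMap_smul]
    have := h3 ▸ h2 ▸ congrArg b.repr h1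
    have := congrArg (fun f : _ →₀ K => f i) this
    simpa [smul_eq_mul] using this
  have hsum : ∑ i, (b.repr t i) • b i = t := b.sum_repr t
  have hε : qb.counit t = ∑ i, qb.counit ((b.repr t i : H)) * qb.counit (b i) := by
    conv_lhs => rw [← hsum]
    rw [map_sum qb.counit (fun i => b.repr t i • b i) Finset.univ]
    refine Finset.sum_congr rfl fun i _ => ?_
    have hs : (b.repr t i) • b i = ((b.repr t i : H)) * b i := rfl
    rw [hs, map_mul]
  have : ∃ i, qb.counit ((b.repr t i : H)) ≠ 0 := by
    by_contra hc
    push_neg at hc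
    apply htn
    rw [hε]
    simp [hc]
  obtain ⟨i, hi⟩ := this
  exact ⟨b.repr t i, fun a => hrepr a i, hi⟩
end
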